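/- Let δ ≥ 0, B > 0, D > 0, C₁ > 0, C₂ > 0 and C₃ ∈ ℝ, and assume C₁·(ln 2)·D/B ≥ C₂·δ. Then the function g(t) = (2^{D/(B(t−δ))} − 1)·C₁ − C₂·t/(t−δ) + C₃ is strictly decreasing on the interval (δ, ∞). -/

import Mathlib

theorem stmt_5 (δ B D C₁ C₂ C₃ : ℝ) (hδ : 0 ≤ δ) (hB : 0 < B) (hD : 0 < D)
    (hC₁ : 0 < C₁) (hC₂ : 0 < C₂) (hcond : C₂ * δ ≤ C₁ * (Real.log 2) * D / B) :
    StrictAntiOn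
      (fun t : ℝ => ((2 : ℝ) ^ (D / (B * (t - δ))) - 1) * C₁ - C₂ * t / (t - δ) + C₃)
      (Set.Ioi δ) := by
  intro x hx y hy hxy
  simp only [Set.mem_Ioi] at hx hy
  have ha : 0 < x - δ := by linarith
  have hb : 0 < y - δ := by linarith
  have hab : x - δ < y - δ := by linarith
  have hL : 0 < Real.log 2 := Real.log_pos (by norm_num)
  set L := Real.log 2 with hLdef
  set a := x - δ with hadef
  set b := y - δ with hbdef
  have hrw : ∀ t : ℝ, (2 : ℝ) ^ (D / (B * (t - δ))) =
      Real.exp (L * (D / (B * (t - δ)))) := fun t =>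
    Real.rpow_def_of_pos (by norm_num : (0:ℝ) < 2) _
  simp only [hrw x, hrw y]
  set p := L * (D / (B * a)) with hpdef
  set q := L * (D / (B * b)) with hqdef
  have hq0 : 0 < q := by positivity
  have hpq : q < p := by
    apply mul_lt_mul_of_pos_left _ hL
    exact div_lt_div_of_pos_left hD (by positivity) (mul_lt_mul_of_pos_left hab hB)
  have hexpq : 1 < Real.exp q := by
    have := Real.add_one_lt_exp (ne_of_gt hq0)
    linarith
  have hexp0 : 0 < Real.exp q := Real.exp_pos q
  -- key convexity step: exp q * (p - q) < exp p - exp q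
  have hkey : Real.exp q * (p - q) < Real.exp p - Real.exp q := by
    have h1 : (p - q) + 1 < Real.exp (p - q) :=
      Real.add_one_lt_exp (by linarith)
    have h2 : Real.exp q * ((p - q) + 1) < Real.exp q * Real.exp (p - q) :=
      mul_lt_mul_of_pos_left h1 hexp0
    rw [← Real.exp_add] at h2
    have : q + (p - q) = p := by ring
    rw [this] at h2
    nlinarith
  have hpmq : p - q < Real.exp p - Real.exp q := by nlinarith
  -- rewrite C₂ * t / (t - δ)
  have hxr : C₂ * x / a = C₂ + C₂ * δ / a := by
    field_simp
    ring
  have hyr : C₂ * y / b = C₂ + C₂ * δ / b := by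
    field_simp
    ring
  -- the difference of the linear parts
  have hdiff : C₂ * δ / a - C₂ * δ / b ≤ C₁ * (p - q) := by
    have h1 : C₂ * δ / a - C₂ * δ / b = (C₂ * δ) * (1/a - 1/b) := by ring
    have h2 : C₁ * (p - q) = (C₁ * L * D / B) * (1/a - 1/b) := by
      rw [hpdef, hqdef]
      field_simp
    have h3 : 0 < 1/a - 1/b := by
      have := one_div_lt_one_div_of_lt ha hab
      linarith
    rw [h1, h2]
    exact mul_le_mul_of_nonneg_right hcond h3.le
  have hfin : C₂ * δ / a - C₂ * δ / b < C₁ * (Real.exp p - Real.exp q) := by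
    have : C₁ * (p - q) < C₁ * (Real.exp p - Real.exp q) :=
      mul_lt_mul_of_pos_left hpmq hC₁
    linarith
  simp only [← hadef, ← hbdef, hxr, hyr]
  nlinarith
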